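/- arXiv:1012.4116 — 4 statements merged into one kernel-verified Lean document; each statement's English description precedes it below -/
import Mathlib

section
/- For any vector x in R^D and any two d-dimensional linear subspaces L1, L2 of R^D, the distances from x to L1 and to L2 differ by at most the norm of x times the geodesic Grassmannian distance between L1 and L2, where the geodesic distance is the square root of the sum of squares of the principal angles between L1 and L2. -/
open Matrix

section Aux

variable {D d : ℕ}

private lemma dot_mulVec_orth' {m n : ℕ} (Q : Matrix (Fin m) (Fin n) ℝ) (hQ : Qᵀ * Q = 1)
    (a b : Fin n → ℝ) : (Q *ᵥ a) ⬝ᵥ (Q *ᵥ b) = a ⬝ᵥ b := by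
  rw [dotProduct_mulVec, ← mulVec_transpose, mulVec_mulVec, hQ, one_mulVec]

private lemma dot_self_nonneg' (a : Fin d → ℝ) : 0 ≤ a ⬝ᵥ a :=
  Finset.sum_nonneg fun _ _ => mul_self_nonneg _

private lemma dot_self_pos' {a : Fin d → ℝ} (ha : a ≠ 0) : 0 < a ⬝ᵥ a := by
  rcases (dot_self_nonneg' a).eq_or_lt with h | h
  · exfalso; apply ha; funext i
    have := Finset.sum_eq_zero_iff_of_nonneg (fun i _ => mul_self_nonneg (a i)) |>.mp h.symm i
      (Finset.mem_univ i)
    have := mul_self_eq_zero.mp this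
    simpa using this
  · exact h

/-- Rayleigh lower bound via min eigenvalue. -/
private lemma rayleigh_lower (hd : 0 < d) (H : Matrix (Fin d) (Fin d) ℝ) (hH : H.IsHermitian)
    (c : Fin d → ℝ) :
    (Finset.univ.inf' (Finset.univ_nonempty_iff.mpr ⟨⟨0, hd⟩⟩) hH.eigenvalues) * (c ⬝ᵥ c)
      ≤ c ⬝ᵥ (H *ᵥ c) := by
  classical
  set U : Matrix (Fin d) (Fin d) ℝ := (hH.eigenvectorUnitary : Matrix (Fin d) (Fin d) ℝ) with hU
  have hUU : Uᵀ * U = 1 := by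
    have := (Matrix.mem_unitaryGroup_iff').mp hH.eigenvectorUnitary.2
    simpa [star_eq_conjTranspose, conjTranspose_eq_transpose_of_trivial] using this
  have hUUt : U * Uᵀ = 1 := by
    have := (Matrix.mem_unitaryGroup_iff).mp hH.eigenvectorUnitary.2
    simpa [star_eq_conjTranspose, conjTranspose_eq_transpose_of_trivial] using this
  set e : Fin d → ℝ := Uᵀ *ᵥ c with he
  have hce : c ⬝ᵥ c = e ⬝ᵥ e := by
    rw [he, dot_mulVec_orth' Uᵀ (by simpa using hUUt)]
  have hHc : c ⬝ᵥ (H *ᵥ c) = ∑ i, hH.eigenvalues i * (e i)^2 := by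
    conv_lhs => rw [hH.spectral_theorem]
    rw [Unitary.conjStarAlgAut_apply, star_eq_conjTranspose, conjTranspose_eq_transpose_of_trivial, ← mulVec_mulVec,
      ← mulVec_mulVec, dotProduct_mulVec, ← mulVec_transpose, ← he]
    simp [mulVec_diagonal, dotProduct, mul_comm, pow_two, mul_assoc, Function.comp]
    ring_nf
    apply Finset.sum_congr rfl
    intro i _
    ring
  rw [hce, hHc]
  calc (Finset.univ.inf' _ hH.eigenvalues) * (e ⬝ᵥ e)
      = ∑ i, (Finset.univ.inf' _ hH.eigenvalues) * (e i * e i) := by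
        rw [← Finset.mul_sum]; rfl
    _ ≤ ∑ i, hH.eigenvalues i * (e i)^2 := by
        apply Finset.sum_le_sum
        intro i _
        rw [← pow_two]
        exact mul_le_mul_of_nonneg_right (Finset.inf'_le _ (Finset.mem_univ i)) (sq_nonneg _)

variable (M : Matrix (Fin d) (Fin d) ℝ)

private lemma dot_gram (c : Fin d → ℝ) : c ⬝ᵥ ((Mᴴ * M) *ᵥ c) = (M *ᵥ c) ⬝ᵥ (M *ᵥ c) := by
  rw [conjTranspose_eq_transpose_of_trivial, ← mulVec_mulVec, dotProduct_mulVec,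
    ← mulVec_transpose, dotProduct_comm, transpose_transpose]

private lemma dot_gram' (c : Fin d → ℝ) : c ⬝ᵥ ((M * Mᴴ) *ᵥ c) = (Mᵀ *ᵥ c) ⬝ᵥ (Mᵀ *ᵥ c) := by
  rw [conjTranspose_eq_transpose_of_trivial, ← mulVec_mulVec, dotProduct_mulVec,
    ← mulVec_transpose, dotProduct_comm]

private lemma eig_nonneg (i : Fin d) : 0 ≤ (isHermitian_conjTranspose_mul_self M).eigenvalues i := by
  have h := (isHermitian_conjTranspose_mul_self M).eigenvalues_eq i
  rw [h]
  simp only [RCLike.re_to_real]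
  have : star ⇑((isHermitian_conjTranspose_mul_self M).eigenvectorBasis i)
      = ⇑((isHermitian_conjTranspose_mul_self M).eigenvectorBasis i) := by
    funext j; simp
  rw [this, dot_gram]
  exact Finset.sum_nonneg fun j _ => mul_self_nonneg _

private lemma eig_le_one (hM : ∀ c : Fin d → ℝ, (M *ᵥ c) ⬝ᵥ (M *ᵥ c) ≤ c ⬝ᵥ c) (i : Fin d) :
    (isHermitian_conjTranspose_mul_self M).eigenvalues i ≤ 1 := by
  have h := (isHermitian_conjTranspose_mul_self M).eigenvalues_eq i
  set b : Fin d → ℝ := ⇑((isHermitian_conjTranspose_mul_self M).eigenvectorBasis i) with hb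
  have hstar : star b = b := by funext j; simp [hb]
  have hbb : b ⬝ᵥ b = 1 := by
    have h1 : ‖(isHermitian_conjTranspose_mul_self M).eigenvectorBasis i‖ = 1 :=
      (isHermitian_conjTranspose_mul_self M).eigenvectorBasis.orthonormal.1 i
    have h2 := EuclideanSpace.norm_eq ((isHermitian_conjTranspose_mul_self M).eigenvectorBasis i)
    rw [h1] at h2
    have h3 : (∑ j, ‖b j‖^2) = 1 := Real.sqrt_eq_one.mp h2.symm
    simpa [dotProduct, Real.norm_eq_abs, sq_abs, pow_two] using h3
  rw [h]
  simp only [RCLike.re_to_real]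
  rw [hstar, dot_gram]
  calc (M *ᵥ b) ⬝ᵥ (M *ᵥ b) ≤ b ⬝ᵥ b := hM b
    _ = 1 := hbb

open Finset in
/-- min eigenvalue of `MᴴM` is at most min eigenvalue of `MMᴴ`. -/
private lemma minEig_transfer (hd : 0 < d) :
    Finset.univ.inf' (Finset.univ_nonempty_iff.mpr ⟨⟨0, hd⟩⟩)
        (isHermitian_conjTranspose_mul_self M).eigenvalues
      ≤ Finset.univ.inf' (Finset.univ_nonempty_iff.mpr ⟨⟨0, hd⟩⟩)
        (isHermitian_mul_conjTranspose_self M).eigenvalues := by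
  classical
  set hH := isHermitian_conjTranspose_mul_self M
  set hG := isHermitian_mul_conjTranspose_self M
  set ne : Finset.univ.Nonempty := Finset.univ_nonempty_iff.mpr ⟨(⟨0, hd⟩ : Fin d)⟩
  set μH := Finset.univ.inf' ne hH.eigenvalues with hμH
  set μG := Finset.univ.inf' ne hG.eigenvalues with hμG
  obtain ⟨j0, -, hj0⟩ := Finset.exists_mem_eq_inf' ne hG.eigenvalues
  set v : Fin d → ℝ := ⇑(hG.eigenvectorBasis j0) with hv
  have hvne : v ≠ 0 := by
    intro h; apply hG.eigenvectorBasis.orthonormal.ne_zero j0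
    ext i; simpa [hv] using congrFun h i
  have hGv : (M * Mᴴ) *ᵥ v = μG • v := by
    rw [hμG, hj0]; exact hG.mulVec_eigenvectorBasis j0
  set w : Fin d → ℝ := Mᵀ *ᵥ v with hw
  by_cases hw0 : w = 0
  · have hvG : v ⬝ᵥ ((M * Mᴴ) *ᵥ v) = 0 := by
      rw [dot_gram', ← hw, hw0]; simp
    have hvv : 0 < v ⬝ᵥ v := dot_self_pos' hvne
    have hμG0 : μG = 0 := by
      have : v ⬝ᵥ ((M * Mᴴ) *ᵥ v) = μG * (v ⬝ᵥ v) := by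
        rw [hGv, dotProduct_smul]; ring_nf
      rw [this] at hvG
      exact (mul_eq_zero.mp hvG).resolve_right (ne_of_gt hvv)
    have hdet : Mᵀ.det = 0 := by
      rw [← Matrix.exists_mulVec_eq_zero_iff]
      exact ⟨v, hvne, hw0 ▸ hw.symm⟩
    have hdetM : M.det = 0 := by rwa [Matrix.det_transpose] at hdet
    obtain ⟨u, hune, hu⟩ := Matrix.exists_mulVec_eq_zero_iff.mpr hdetM
    have h1 : μH * (u ⬝ᵥ u) ≤ u ⬝ᵥ ((Mᴴ * M) *ᵥ u) := rayleigh_lower hd _ hH u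
    rw [dot_gram, hu] at h1
    simp only [dotProduct_zero] at h1
    have := le_div_iff₀ (dot_self_pos' hune) |>.mpr h1
    rw [zero_div] at this
    rw [hμG0]
    exact this
  · have hHw : (Mᴴ * M) *ᵥ w = μG • w := by
      calc (Mᴴ * M) *ᵥ w = Mᵀ *ᵥ ((M * Mᴴ) *ᵥ v) := by
            rw [hw, conjTranspose_eq_transpose_of_trivial, mulVec_mulVec, mulVec_mulVec,
              mul_assoc]
        _ = μG • w := by rw [hGv, mulVec_smul, hw]
    have h1 : μH * (w ⬝ᵥ w) ≤ w ⬝ᵥ ((Mᴴ * M) *ᵥ w) := rayleigh_lower hd _ hH w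
    rw [hHw, dotProduct_smul, smul_eq_mul] at h1
    exact le_of_mul_le_mul_right h1 (dot_self_pos' hw0)

private lemma enorm_eq (y : EuclideanSpace ℝ (Fin D)) :
    ‖y‖ = Real.sqrt ((fun i => y i) ⬝ᵥ (fun i => y i)) := by
  rw [EuclideanSpace.norm_eq]
  congr 1
  simp [dotProduct, Real.norm_eq_abs, sq_abs, pow_two]

private lemma sum_smul_col (Q : Matrix (Fin D) (Fin d) ℝ) (c : Fin d → ℝ) :
    (∑ j, c j • (WithLp.toLp 2 (fun i => Q i j) : EuclideanSpace ℝ (Fin D))) =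
      (WithLp.toLp 2 (fun i => (Q *ᵥ c) i) : EuclideanSpace ℝ (Fin D)) := by
  ext i
  simp [WithLp.ofLp_sum, Finset.sum_apply, mulVec, dotProduct, mul_comm]

private lemma geom_key (Q1 Q2 : Matrix (Fin D) (Fin d) ℝ)
    (hQ1 : Q1ᵀ * Q1 = 1) (hQ2 : Q2ᵀ * Q2 = 1)
    (x : EuclideanSpace ℝ (Fin D)) (s : ℝ) (hs0 : 0 ≤ s)
    (hs : ∀ c : Fin d → ℝ,
      (c ⬝ᵥ c) - (Q1ᵀ *ᵥ (Q2 *ᵥ c)) ⬝ᵥ (Q1ᵀ *ᵥ (Q2 *ᵥ c)) ≤ s ^ 2 * (c ⬝ᵥ c)) :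
    Metric.infDist x ((Submodule.span ℝ
        (Set.range fun j : Fin d => (WithLp.toLp 2 (fun i => Q1 i j) : EuclideanSpace ℝ (Fin D)))
        : Submodule ℝ (EuclideanSpace ℝ (Fin D))) : Set (EuclideanSpace ℝ (Fin D))) -
      Metric.infDist x ((Submodule.span ℝ
        (Set.range fun j : Fin d => (WithLp.toLp 2 (fun i => Q2 i j) : EuclideanSpace ℝ (Fin D)))
        : Submodule ℝ (EuclideanSpace ℝ (Fin D))) : Set (EuclideanSpace ℝ (Fin D))) ≤
      ‖x‖ * s := by
  classical
  set L1 : Submodule ℝ (EuclideanSpace ℝ (Fin D)) := Submodule.span ℝ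
    (Set.range fun j : Fin d => (WithLp.toLp 2 (fun i => Q1 i j) : EuclideanSpace ℝ (Fin D))) with hL1
  set L2 : Submodule ℝ (EuclideanSpace ℝ (Fin D)) := Submodule.span ℝ
    (Set.range fun j : Fin d => (WithLp.toLp 2 (fun i => Q2 i j) : EuclideanSpace ℝ (Fin D))) with hL2
  haveI : FiniteDimensional ℝ L2 := FiniteDimensional.span_of_finite ℝ (Set.finite_range _)
  set p2 : EuclideanSpace ℝ (Fin D) := (L2.orthogonalProjectionOnto x : EuclideanSpace ℝ (Fin D))
    with hp2def
  have hd2 : Metric.infDist x (L2 : Set (EuclideanSpace ℝ (Fin D))) = ‖x - p2‖ := by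
    rw [Metric.infDist_eq_iInf]
    simp only [dist_eq_norm]
    exact (Submodule.starProjection_minimal x).symm
  have hp2mem : p2 ∈ L2 := (L2.orthogonalProjectionOnto x).2
  rw [hL2] at hp2mem
  obtain ⟨c, hc⟩ := (Submodule.mem_span_range_iff_exists_fun ℝ).mp hp2mem
  have hcfun : p2 = (WithLp.toLp 2 (fun i => (Q2 *ᵥ c) i) : EuclideanSpace ℝ (Fin D)) := by
    rw [← hc, sum_smul_col]
  set w : Fin d → ℝ := Q1ᵀ *ᵥ (Q2 *ᵥ c) with hw
  set y1 : EuclideanSpace ℝ (Fin D) := WithLp.toLp 2 (fun i => (Q1 *ᵥ w) i) with hy1def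
  have hy1mem : y1 ∈ L1 := by
    rw [hL1]
    exact (Submodule.mem_span_range_iff_exists_fun ℝ).mpr ⟨w, by rw [sum_smul_col]⟩
  have h1 : Metric.infDist x (L1 : Set (EuclideanSpace ℝ (Fin D))) ≤ ‖x - y1‖ := by
    simpa [dist_eq_norm] using Metric.infDist_le_dist_of_mem hy1mem
  have tri : ‖x - y1‖ ≤ ‖x - p2‖ + ‖p2 - y1‖ := by
    have : x - y1 = (x - p2) + (p2 - y1) := by abel
    rw [this]; exact norm_add_le _ _
  have hdot : (fun i => (p2 - y1) i) ⬝ᵥ (fun i => (p2 - y1) i)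
      = c ⬝ᵥ c - w ⬝ᵥ w := by
    have hpt : (fun i => (p2 - y1) i) = (Q2 *ᵥ c) - (Q1 *ᵥ w) := by
      funext i
      simp only [PiLp.sub_apply, hy1def]
      rw [hcfun]
      rfl
    rw [hpt]
    have e1 : (Q2 *ᵥ c) ⬝ᵥ (Q2 *ᵥ c) = c ⬝ᵥ c := dot_mulVec_orth' Q2 hQ2 c c
    have e2 : (Q1 *ᵥ w) ⬝ᵥ (Q1 *ᵥ w) = w ⬝ᵥ w := dot_mulVec_orth' Q1 hQ1 w w
    have e3 : (Q2 *ᵥ c) ⬝ᵥ (Q1 *ᵥ w) = w ⬝ᵥ w := by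
      rw [dotProduct_mulVec, ← mulVec_transpose, mulVec_mulVec]
      rw [hw, ← mulVec_mulVec]
    have e4 : (Q1 *ᵥ w) ⬝ᵥ (Q2 *ᵥ c) = w ⬝ᵥ w := by rw [dotProduct_comm, e3]
    rw [sub_dotProduct, dotProduct_sub, dotProduct_sub, e1, e2, e3, e4]
    ring
  have hny : ‖p2 - y1‖ ≤ s * Real.sqrt (c ⬝ᵥ c) := by
    rw [enorm_eq, hdot]
    calc Real.sqrt (c ⬝ᵥ c - w ⬝ᵥ w) ≤ Real.sqrt (s ^ 2 * (c ⬝ᵥ c)) :=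
          Real.sqrt_le_sqrt (hs c)
      _ = s * Real.sqrt (c ⬝ᵥ c) := by
          rw [Real.sqrt_mul (sq_nonneg s), Real.sqrt_sq hs0]
  have hnp2 : ‖p2‖ = Real.sqrt (c ⬝ᵥ c) := by
    rw [enorm_eq]
    congr 1
    have hpt : (fun i => p2 i) = (Q2 *ᵥ c) := by
      funext i; rw [hcfun]
    rw [hpt, dot_mulVec_orth' Q2 hQ2 c c]
  have hp2x : ‖p2‖ ≤ ‖x‖ := by
    calc ‖p2‖ = ‖L2.orthogonalProjectionOnto x‖ := rfl
      _ ≤ ‖L2.orthogonalProjectionOnto‖ * ‖x‖ := (L2.orthogonalProjectionOnto).le_opNorm x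
      _ ≤ 1 * ‖x‖ := by
          exact mul_le_mul_of_nonneg_right (Submodule.orthogonalProjectionOnto_norm_le L2) (norm_nonneg x)
      _ = ‖x‖ := one_mul _
  have : s * Real.sqrt (c ⬝ᵥ c) ≤ ‖x‖ * s := by
    rw [← hnp2, mul_comm]
    exact mul_le_mul_of_nonneg_right hp2x hs0
  linarith [hd2, h1, tri, hny]

end Aux

/-- The singular values of a real matrix `A`, defined as the square roots of the
eigenvalues of `Aᴴ * A` (in some order). -/
noncomputable def svals {m n : ℕ} (A : Matrix (Fin m) (Fin n) ℝ) : Fin n → ℝ :=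
  fun i => Real.sqrt ((Matrix.isHermitian_conjTranspose_mul_self A).eigenvalues i)

/-- The principal angles between two `d`-subspaces spanned by the (orthonormal) columns of
`Q1` and `Q2`, defined via `θ i = arccos (σ_i (Q2ᵀ * Q1))`. -/
noncomputable def principalAngles {D d : ℕ} (Q1 Q2 : Matrix (Fin D) (Fin d) ℝ) : Fin d → ℝ :=
  fun i => Real.arccos (svals (Q2ᵀ * Q1) i)

set_option maxHeartbeats 1000000 in
theorem stmt0 (D d : ℕ)
    (Q1 Q2 : Matrix (Fin D) (Fin d) ℝ)
    (hQ1 : Q1ᵀ * Q1 = 1) (hQ2 : Q2ᵀ * Q2 = 1)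
    (L1 L2 : Submodule ℝ (EuclideanSpace ℝ (Fin D)))
    (hL1 : L1 = Submodule.span ℝ
      (Set.range fun j : Fin d => (WithLp.toLp 2 (fun i => Q1 i j) : EuclideanSpace ℝ (Fin D))))
    (hL2 : L2 = Submodule.span ℝ
      (Set.range fun j : Fin d => (WithLp.toLp 2 (fun i => Q2 i j) : EuclideanSpace ℝ (Fin D))))
    (x : EuclideanSpace ℝ (Fin D)) :
    |Metric.infDist x (L1 : Set (EuclideanSpace ℝ (Fin D))) -
        Metric.infDist x (L2 : Set (EuclideanSpace ℝ (Fin D)))| ≤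
      ‖x‖ * Real.sqrt (∑ i, principalAngles Q1 Q2 i ^ 2) := by
  classical
  rcases Nat.eq_zero_or_pos d with hd0 | hd
  · subst hd0
    have hLL : L1 = L2 := by
      rw [hL1, hL2, Set.range_eq_empty, Set.range_eq_empty]
    rw [hLL, sub_self, abs_zero]
    exact mul_nonneg (norm_nonneg x) (Real.sqrt_nonneg _)
  · set M : Matrix (Fin d) (Fin d) ℝ := Q2ᵀ * Q1 with hM
    set ne : (Finset.univ : Finset (Fin d)).Nonempty :=
      Finset.univ_nonempty_iff.mpr ⟨(⟨0, hd⟩ : Fin d)⟩ with hne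
    set μ : ℝ := Finset.univ.inf' ne (isHermitian_conjTranspose_mul_self M).eigenvalues with hμ
    -- M is a contraction
    have hcontr : ∀ z : Fin D → ℝ, (Q2ᵀ *ᵥ z) ⬝ᵥ (Q2ᵀ *ᵥ z) ≤ z ⬝ᵥ z := by
      intro z
      set u : Fin d → ℝ := Q2ᵀ *ᵥ z with hu
      have e3 : z ⬝ᵥ (Q2 *ᵥ u) = u ⬝ᵥ u := by
        rw [dotProduct_mulVec, ← mulVec_transpose]
      have e4 : (Q2 *ᵥ u) ⬝ᵥ z = u ⬝ᵥ u := by rw [dotProduct_comm, e3]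
      have e2 : (Q2 *ᵥ u) ⬝ᵥ (Q2 *ᵥ u) = u ⬝ᵥ u := dot_mulVec_orth' Q2 hQ2 u u
      have h0 : 0 ≤ (z - Q2 *ᵥ u) ⬝ᵥ (z - Q2 *ᵥ u) := dot_self_nonneg' _
      rw [sub_dotProduct, dotProduct_sub, dotProduct_sub, e2, e3, e4] at h0
      linarith
    have hMc : ∀ c : Fin d → ℝ, (M *ᵥ c) ⬝ᵥ (M *ᵥ c) ≤ c ⬝ᵥ c := by
      intro c
      have h1 : M *ᵥ c = Q2ᵀ *ᵥ (Q1 *ᵥ c) := by rw [hM, ← mulVec_mulVec]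
      calc (M *ᵥ c) ⬝ᵥ (M *ᵥ c) = (Q2ᵀ *ᵥ (Q1 *ᵥ c)) ⬝ᵥ (Q2ᵀ *ᵥ (Q1 *ᵥ c)) := by rw [h1]
        _ ≤ (Q1 *ᵥ c) ⬝ᵥ (Q1 *ᵥ c) := hcontr _
        _ = c ⬝ᵥ c := dot_mulVec_orth' Q1 hQ1 c c
    -- bounds on μ
    obtain ⟨i0, -, hi0⟩ := Finset.exists_mem_eq_inf' ne (isHermitian_conjTranspose_mul_self M).eigenvalues
    have hμ0 : 0 ≤ μ := by rw [hμ, hi0]; exact eig_nonneg M i0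
    have hμ1 : μ ≤ 1 := by rw [hμ, hi0]; exact eig_le_one M hMc i0
    set s : ℝ := Real.sqrt (1 - μ) with hsdef
    have hs0 : 0 ≤ s := Real.sqrt_nonneg _
    have hssq : s ^ 2 = 1 - μ := Real.sq_sqrt (by linarith)
    -- s ≤ sqrt (∑ θ²)
    have hsθ : s ≤ Real.sqrt (∑ i, principalAngles Q1 Q2 i ^ 2) := by
      have hθ0 : principalAngles Q1 Q2 i0 = Real.arccos (Real.sqrt μ) := by
        rw [principalAngles, svals, hμ, hi0]
      have hsin : s = Real.sin (principalAngles Q1 Q2 i0) := by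
        rw [hθ0, Real.sin_arccos, Real.sq_sqrt (by rw [hμ, hi0]; exact eig_nonneg M i0), hsdef]
      calc s = Real.sin (principalAngles Q1 Q2 i0) := hsin
        _ ≤ principalAngles Q1 Q2 i0 := Real.sin_le (by rw [hθ0]; exact Real.arccos_nonneg _)
        _ = Real.sqrt (principalAngles Q1 Q2 i0 ^ 2) := by
            rw [Real.sqrt_sq (by rw [hθ0]; exact Real.arccos_nonneg _)]
        _ ≤ Real.sqrt (∑ i, principalAngles Q1 Q2 i ^ 2) := by
            apply Real.sqrt_le_sqrt
            exact Finset.single_le_sum (f := fun i => principalAngles Q1 Q2 i ^ 2)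
              (fun i _ => sq_nonneg _) (Finset.mem_univ i0)
    have hRHS : ‖x‖ * s ≤ ‖x‖ * Real.sqrt (∑ i, principalAngles Q1 Q2 i ^ 2) :=
      mul_le_mul_of_nonneg_left hsθ (norm_nonneg x)
    -- Direction 2: infDist L2 - infDist L1
    have hdir2 : Metric.infDist x (L2 : Set (EuclideanSpace ℝ (Fin D))) -
        Metric.infDist x (L1 : Set (EuclideanSpace ℝ (Fin D))) ≤ ‖x‖ * s := by
      rw [hL1, hL2]
      apply geom_key Q2 Q1 hQ2 hQ1 x s hs0
      intro c
      have hwM : Q2ᵀ *ᵥ (Q1 *ᵥ c) = M *ᵥ c := by rw [hM, ← mulVec_mulVec]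
      rw [hwM]
      have h1 : μ * (c ⬝ᵥ c) ≤ c ⬝ᵥ ((Mᴴ * M) *ᵥ c) :=
        rayleigh_lower hd _ (isHermitian_conjTranspose_mul_self M) c
      rw [dot_gram] at h1
      rw [hssq]
      nlinarith [dot_self_nonneg' c]
    -- Direction 1: infDist L1 - infDist L2
    have hdir1 : Metric.infDist x (L1 : Set (EuclideanSpace ℝ (Fin D))) -
        Metric.infDist x (L2 : Set (EuclideanSpace ℝ (Fin D))) ≤ ‖x‖ * s := by
      rw [hL1, hL2]
      apply geom_key Q1 Q2 hQ1 hQ2 x s hs0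
      intro c
      have hwM : Q1ᵀ *ᵥ (Q2 *ᵥ c) = Mᵀ *ᵥ c := by
        rw [hM, transpose_mul, transpose_transpose, ← mulVec_mulVec]
      rw [hwM]
      have h2 : (Finset.univ.inf' ne (isHermitian_mul_conjTranspose_self M).eigenvalues)
          * (c ⬝ᵥ c) ≤ c ⬝ᵥ ((M * Mᴴ) *ᵥ c) :=
        rayleigh_lower hd _ (isHermitian_mul_conjTranspose_self M) c
      rw [dot_gram'] at h2
      have htr : μ ≤ Finset.univ.inf' ne (isHermitian_mul_conjTranspose_self M).eigenvalues :=
        minEig_transfer M hd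
      rw [hssq]
      nlinarith [dot_self_nonneg' c]
    rw [abs_sub_le_iff]
    exact ⟨le_trans hdir1 hRHS, le_trans hdir2 hRHS⟩
end

section
/- Let p > 1 and let x, y be vectors in the closed unit ball of R^D. If 1 < p ≤ 2 then ‖ ‖x‖^{p−2} x − ‖y‖^{p−2} y ‖ ≤ 2^{3−p} ‖x − y‖^{p−1}, and if p > 2 then ‖ ‖x‖^{p−2} x − ‖y‖^{p−2} y ‖ ≤ (p−1) ‖x − y‖. -/
open Real

lemma young_aux {q a b : ℝ} (hq : 0 < q) (hb : 0 ≤ b) (hba : b ≤ a) :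
    (a ^ q - b ^ q) * b ≤ q * a ^ q * (a - b) := by
  rcases eq_or_lt_of_le (hb.trans hba) with ha | ha
  · have hb0 : b = 0 := le_antisymm (hba.trans ha.symm.le) hb
    simp [← ha, hb0]
  · have hs : (-1 : ℝ) ≤ b / a - 1 := by
      have : 0 ≤ b / a := div_nonneg hb ha.le
      linarith
    have hbern := one_add_mul_self_le_rpow_one_add hs (p := q + 1) (by linarith)
    rw [add_sub_cancel] at hbern
    have hdiv : (b / a) ^ (q + 1) = b ^ (q + 1) / a ^ (q + 1) :=
      Real.div_rpow hb ha.le _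
    rw [hdiv] at hbern
    have haq : a ^ (q + 1) = a ^ q * a := Real.rpow_add_one ha.ne' q
    have hbq : b ^ (q + 1) = b ^ q * b := Real.rpow_add_one' hb (by linarith)
    have hA : 0 < a ^ q := Real.rpow_pos_of_pos ha q
    have hAq1 : 0 < a ^ (q + 1) := Real.rpow_pos_of_pos ha (q + 1)
    have h2 : (1 + (q + 1) * (b / a - 1)) * a ^ (q + 1) ≤ b ^ (q + 1) := by
      rw [← le_div_iff₀ hAq1] at *
      exact hbern
    rw [haq, hbq] at h2
    have key : (1 + (q + 1) * (b / a - 1)) * (a ^ q * a)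
        = a ^ q * a + (q+1) * a ^ q * (b - a) := by
      field_simp
    rw [key] at h2
    nlinarith [hA.le]

lemma bern_neg_aux {q a b : ℝ} (hq0 : 0 ≤ q) (hq1 : q ≤ 1) (hb : 0 < b) (hba : b ≤ a) :
    (b ^ (-q) - a ^ (-q)) * b ≤ q * b ^ (-q) * (a - b) := by
  have ha : 0 < a := hb.trans_le hba
  have hs : (-1 : ℝ) ≤ a / b - 1 := by
    have : 0 ≤ a / b := div_nonneg ha.le hb.le
    linarith
  have hbern := rpow_one_add_le_one_add_mul_self hs hq0 hq1
  rw [add_sub_cancel] at hbern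
  set u := (a / b) ^ q with hu
  set v := (b / a) ^ q with hv
  have huv : u * v = 1 := by
    rw [hu, hv, ← Real.mul_rpow (by positivity) (by positivity)]
    rw [div_mul_div_comm]
    rw [mul_comm b a, div_self (by positivity)]
    exact Real.one_rpow q
  have hu1 : 1 ≤ u := Real.one_le_rpow ((one_le_div hb).mpr hba) hq0
  have hv0 : 0 < v := Real.rpow_pos_of_pos (by positivity) q
  have h1v : 1 - v ≤ q * (a / b - 1) := by
    have h2 : 1 - v ≤ u - 1 := by nlinarith
    linarith
  have hBvA : b ^ (-q) * v = a ^ (-q) := by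
    rw [hv, Real.div_rpow hb.le ha.le, Real.rpow_neg hb.le, Real.rpow_neg ha.le]
    have : b ^ q ≠ 0 := (Real.rpow_pos_of_pos hb q).ne'
    field_simp
  have hB : 0 < b ^ (-q) := Real.rpow_pos_of_pos hb _
  have hmul : b ^ (-q) * ((1 - v) * b) ≤ b ^ (-q) * (q * (a / b - 1) * b) := by
    apply mul_le_mul_of_nonneg_left _ hB.le
    apply mul_le_mul_of_nonneg_right h1v hb.le
  have heq : q * (a / b - 1) * b = q * (a - b) := by field_simp
  rw [heq] at hmul
  calc (b ^ (-q) - a ^ (-q)) * b = b ^ (-q) * ((1 - v) * b) := by rw [← hBvA]; ring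
    _ ≤ b ^ (-q) * (q * (a - b)) := hmul
    _ = q * b ^ (-q) * (a - b) := by ring

lemma decomp_aux {E : Type*} [NormedAddCommGroup E] [NormedSpace ℝ E]
    {c d : ℝ} (hc : 0 ≤ c) (x y : E) :
    ‖c • x - d • y‖ ≤ c * ‖x - y‖ + |c - d| * ‖y‖ := by
  have h : c • x - d • y = c • (x - y) + (c - d) • y := by module
  rw [h]
  refine (norm_add_le _ _).trans ?_
  rw [norm_smul, norm_smul, Real.norm_eq_abs, Real.norm_eq_abs, abs_of_nonneg hc]

lemma main_le2 {E : Type*} [NormedAddCommGroup E] [NormedSpace ℝ E]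
    {p : ℝ} (hp : 1 < p) (hp2 : p ≤ 2) (x y : E) (hba : ‖y‖ ≤ ‖x‖) :
    ‖(‖x‖ ^ (p - 2)) • x - (‖y‖ ^ (p - 2)) • y‖ ≤
      (2 : ℝ) ^ (3 - p) * ‖x - y‖ ^ (p - 1) := by
  set a := ‖x‖ with haa
  set b := ‖y‖ with hbb
  set t := ‖x - y‖ with htt
  have ha0 : 0 ≤ a := norm_nonneg x
  have hb0 : 0 ≤ b := norm_nonneg y
  have ht0 : 0 ≤ t := norm_nonneg _
  rcases eq_or_lt_of_le ha0 with ha | ha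
  · -- a = 0, so x = y = 0
    have hxz : x = 0 := by rwa [eq_comm, norm_eq_zero] at ha
    have hyz : y = 0 := by
      rw [← norm_eq_zero]; exact le_antisymm (hba.trans ha.symm.le) hb0
    have hR : (0:ℝ) ≤ 2 ^ (3 - p) * t ^ (p - 1) :=
      mul_nonneg (Real.rpow_nonneg (by norm_num) _) (Real.rpow_nonneg ht0 _)
    simp only [hxz, hyz, smul_zero, sub_zero, norm_zero]
    exact hR
  rcases eq_or_lt_of_le ht0 with ht | ht
  · -- t = 0, x = y
    have hxy : x = y := by
      have := ht.symm
      rw [htt, norm_eq_zero, sub_eq_zero] at this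
      exact this
    have hR : (0:ℝ) ≤ 2 ^ (3 - p) * t ^ (p - 1) :=
      mul_nonneg (Real.rpow_nonneg (by norm_num) _) (Real.rpow_nonneg ht0 _)
    have hab : a = b := by rw [haa, hbb, hxy]
    rw [hab, hxy, sub_self, norm_zero]
    exact hR
  -- main case
  have habt : a - b ≤ t := norm_sub_norm_le x y
  have hta : t ≤ 2 * a := by
    have := norm_sub_le x y
    rw [← haa, ← hbb, ← htt] at this
    linarith
  have hT0 : 0 ≤ t ^ (p - 1) := Real.rpow_nonneg ht0 _
  have hc0 : 0 ≤ a ^ (p - 2) := Real.rpow_nonneg ha0 _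
  -- first term
  have h1 : a ^ (p - 2) * t ≤ 2 ^ (2 - p) * t ^ (p - 1) := by
    have hth : 0 < t / 2 := by linarith
    have hmono : a ^ (p - 2) ≤ (t / 2) ^ (p - 2) :=
      Real.rpow_le_rpow_of_nonpos hth (by linarith) (by linarith)
    have hdiv : (t / 2) ^ (p - 2) = t ^ (p - 2) / 2 ^ (p - 2) :=
      Real.div_rpow ht.le (by norm_num) _
    have h2e : (2 : ℝ) ^ (2 - p) = (2 ^ (p - 2) : ℝ)⁻¹ := by
      rw [show (2 - p) = -(p - 2) by ring, Real.rpow_neg (by norm_num)]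
    have htp : t ^ (p - 2) * t = t ^ (p - 1) := by
      rw [← Real.rpow_add_one ht.ne' (p - 2), show p - 2 + 1 = p - 1 by ring]
    calc a ^ (p - 2) * t ≤ (t / 2) ^ (p - 2) * t :=
          mul_le_mul_of_nonneg_right hmono ht.le
      _ = 2 ^ (2 - p) * t ^ (p - 1) := by
          rw [hdiv, h2e, ← htp]; ring
  -- second term
  have h2 : |a ^ (p - 2) - b ^ (p - 2)| * b ≤ t ^ (p - 1) := by
    rcases eq_or_lt_of_le hb0 with hb | hb
    · rw [← hb]; simpa using hT0
    have hcd : a ^ (p - 2) ≤ b ^ (p - 2) :=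
      Real.rpow_le_rpow_of_nonpos hb hba (by linarith)
    rw [abs_of_nonpos (by linarith), neg_sub]
    rcases eq_or_lt_of_le hba with heq | hlt
    · rw [heq, sub_self, zero_mul]; exact hT0
    rcases le_or_gt b (a - b) with hsm | hbig
    · -- b ≤ a - b
      have hbt : b ≤ t := hsm.trans habt
      have : (b ^ (p - 2) - a ^ (p - 2)) * b ≤ b ^ (p - 2) * b :=
        mul_le_mul_of_nonneg_right (by linarith) hb0
      have hbp : b ^ (p - 2) * b = b ^ (p - 1) := by
        rw [← Real.rpow_add_one hb.ne' (p - 2), show p - 2 + 1 = p - 1 by ring]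
      have hle : b ^ (p - 1) ≤ t ^ (p - 1) :=
        Real.rpow_le_rpow hb0 hbt (by linarith)
      linarith [hbp ▸ this]
    · -- a - b < b
      have hab0 : 0 < a - b := by linarith
      have hbern := bern_neg_aux (q := 2 - p) (by linarith) (by linarith) hb hba
      rw [show -(2 - p) = p - 2 by ring] at hbern
      have hd : b ^ (p - 2) ≤ (a - b) ^ (p - 2) :=
        Real.rpow_le_rpow_of_nonpos hab0 hbig.le (by linarith)
      have habp : (a - b) ^ (p - 2) * (a - b) = (a - b) ^ (p - 1) := by
        rw [← Real.rpow_add_one hab0.ne' (p - 2), show p - 2 + 1 = p - 1 by ring]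
      have hle : (a - b) ^ (p - 1) ≤ t ^ (p - 1) :=
        Real.rpow_le_rpow hab0.le habt (by linarith)
      have hstep : (2 - p) * b ^ (p - 2) * (a - b) ≤ (a - b) ^ (p - 1) := by
        rw [← habp]
        have h1 : (2 - p) * b ^ (p - 2) * (a - b) ≤ (2 - p) * (a - b) ^ (p - 2) * (a - b) := by
          have := mul_le_mul_of_nonneg_right hd hab0.le
          nlinarith
        have h2 : (2 - p) * (a - b) ^ (p - 2) * (a - b) ≤ (a - b) ^ (p - 2) * (a - b) := by
          have hpos : 0 ≤ (a - b) ^ (p - 2) * (a - b) :=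
            mul_nonneg (Real.rpow_nonneg hab0.le _) hab0.le
          nlinarith
        linarith
      linarith [hbern, hstep, hle]
  -- combine
  have hdec := decomp_aux (c := a ^ (p - 2)) (d := b ^ (p - 2)) hc0 x y
  have h23 : (2 : ℝ) ^ (3 - p) = 2 * 2 ^ (2 - p) := by
    rw [show (3 - p) = 1 + (2 - p) by ring, Real.rpow_add (by norm_num), Real.rpow_one]
  have hone : 1 ≤ (2 : ℝ) ^ (2 - p) := by
    have := Real.rpow_le_rpow_of_exponent_le (x := 2) one_le_two
      (by linarith : (0 : ℝ) ≤ 2 - p)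
    rwa [Real.rpow_zero] at this
  rw [h23]
  nlinarith [hdec, h1, h2, hT0]

lemma main_gt2 {E : Type*} [NormedAddCommGroup E] [NormedSpace ℝ E]
    {p : ℝ} (hp2 : 2 < p) (x y : E) (hx : ‖x‖ ≤ 1) (hba : ‖y‖ ≤ ‖x‖) :
    ‖(‖x‖ ^ (p - 2)) • x - (‖y‖ ^ (p - 2)) • y‖ ≤ (p - 1) * ‖x - y‖ := by
  set a := ‖x‖ with haa
  set b := ‖y‖ with hbb
  set t := ‖x - y‖ with htt
  have ha0 : 0 ≤ a := norm_nonneg x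
  have hb0 : 0 ≤ b := norm_nonneg y
  have ht0 : 0 ≤ t := norm_nonneg _
  have habt : a - b ≤ t := norm_sub_norm_le x y
  have hc1 : a ^ (p - 2) ≤ 1 := Real.rpow_le_one ha0 hx (by linarith)
  have hc0 : 0 ≤ a ^ (p - 2) := Real.rpow_nonneg ha0 _
  have hcd : b ^ (p - 2) ≤ a ^ (p - 2) := Real.rpow_le_rpow hb0 hba (by linarith)
  have hyoung := young_aux (q := p - 2) (by linarith) hb0 hba
  have hdec := decomp_aux (c := a ^ (p - 2)) (d := b ^ (p - 2)) hc0 x y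
  rw [abs_of_nonneg (by linarith)] at hdec
  have hbt : b ≤ a := hba
  have h1 : a ^ (p - 2) * t ≤ t := by nlinarith
  have h2 : (a ^ (p - 2) - b ^ (p - 2)) * b ≤ (p - 2) * t := by
    have hca : a ^ (p - 2) * (a - b) ≤ t := by
      nlinarith [mul_le_mul_of_nonneg_right hc1 (show (0:ℝ) ≤ a - b by linarith)]
    have : (p - 2) * a ^ (p - 2) * (a - b) ≤ (p - 2) * t := by
      calc (p - 2) * a ^ (p - 2) * (a - b) = (p - 2) * (a ^ (p - 2) * (a - b)) := by ring
        _ ≤ (p - 2) * t := mul_le_mul_of_nonneg_left hca (by linarith)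
    linarith [hyoung]
  linarith [hdec, h1, h2]

theorem stmt6 (D : ℕ) (p : ℝ) (hp : 1 < p)
    (x y : EuclideanSpace ℝ (Fin D)) (hx : ‖x‖ ≤ 1) (hy : ‖y‖ ≤ 1) :
    (p ≤ 2 →
      ‖(‖x‖ ^ (p - 2)) • x - (‖y‖ ^ (p - 2)) • y‖ ≤
        (2 : ℝ) ^ (3 - p) * ‖x - y‖ ^ (p - 1)) ∧
    (2 < p →
      ‖(‖x‖ ^ (p - 2)) • x - (‖y‖ ^ (p - 2)) • y‖ ≤ (p - 1) * ‖x - y‖) := by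
  constructor
  · intro hp2
    rcases le_total ‖y‖ ‖x‖ with h | h
    · exact main_le2 hp hp2 x y h
    · have := main_le2 hp hp2 y x h
      rwa [norm_sub_rev ((‖y‖ ^ (p - 2)) • y), norm_sub_rev y x] at this
  · intro hp2
    rcases le_total ‖y‖ ‖x‖ with h | h
    · exact main_gt2 hp2 x y hx h
    · have := main_gt2 hp2 y x hy h
      rwa [norm_sub_rev ((‖y‖ ^ (p - 2)) • y), norm_sub_rev y x] at this
end

section
/- Let f, g : R → R with g(0) = 0 and g increasing, and suppose |f'(x1) − f'(x2)| ≤ g(|x1 − x2|) for all x1, x2 ∈ R. If f attains its global minimum at x̂ and g is invertible on the relevant range, then for any x0, f(x0) − f(x̂) ≥ |f'(x0)| · g^{-1}(|f'(x0)|) − ∫_0^{g^{-1}(|f'(x0)|)} g(x) dx. -/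
theorem stmt7 (f f' g : ℝ → ℝ)
    (hf : ∀ x, HasDerivAt f (f' x) x)
    (hg0 : g 0 = 0) (hgmono : Monotone g)
    (hlip : ∀ x1 x2 : ℝ, |f' x1 - f' x2| ≤ g |x1 - x2|)
    (xhat : ℝ) (hmin : ∀ x, f xhat ≤ f x)
    (x0 : ℝ) (gi : ℝ) (hgi : 0 ≤ gi) (hginv : g gi = |f' x0|) :
    f x0 - f xhat ≥ |f' x0| * gi - ∫ x in (0:ℝ)..gi, g x := by
  set s : ℝ := if 0 ≤ f' x0 then 1 else -1 with hs_def
  have hs_abs : |s| = 1 := by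
    rw [hs_def]; split <;> simp
  have hs_mul : s * f' x0 = |f' x0| := by
    rw [hs_def]; split
    · rw [one_mul, abs_of_nonneg ‹_›]
    · rw [abs_of_neg (lt_of_not_ge ‹_›)]; ring
  -- G t = -f (x0 - s * t)
  set G : ℝ → ℝ := fun t => -f (x0 - s * t) with hG_def
  have hGderiv : ∀ t : ℝ, HasDerivAt G (s * f' (x0 - s * t)) t := by
    intro t
    have h1 : HasDerivAt (fun t : ℝ => x0 - s * t) (-s) t := by
      simpa using (((hasDerivAt_id t).const_mul s).const_sub x0)
    have h2 := (hf (x0 - s * t)).comp t h1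
    have : HasDerivAt G (-(f' (x0 - s * t) * -s)) t := h2.neg
    convert this using 1
    ring
  have hgnn : ∀ t : ℝ, 0 ≤ t → 0 ≤ g t := fun t ht => hg0 ▸ hgmono ht
  -- integrability of φ t = |f' x0| - g t on Icc 0 gi
  have hgint : MeasureTheory.IntegrableOn g (Set.Icc 0 gi) := by
    exact (hgmono.monotoneOn _).integrableOn_isCompact isCompact_Icc
  have hφint : MeasureTheory.IntegrableOn (fun t => |f' x0| - g t) (Set.Icc 0 gi) := by
    exact (MeasureTheory.integrableOn_const (by
      simp [Real.volume_Icc])).sub hgint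
  -- key inequality
  have hkey : (∫ t in (0:ℝ)..gi, (|f' x0| - g t)) ≤ G gi - G 0 := by
    apply intervalIntegral.integral_le_sub_of_hasDeriv_right_of_le hgi
    · exact fun t _ => ((hGderiv t).continuousAt).continuousWithinAt
    · exact fun t ht => (hGderiv t).hasDerivWithinAt
    · exact hφint
    · intro t ht
      have h1 : |f' x0| - |f' x0 - f' (x0 - s * t)| ≤ s * f' (x0 - s * t) := by
        have h2 : s * f' x0 - s * (f' x0 - f' (x0 - s * t)) = s * f' (x0 - s * t) := by ring
        rw [← h2, hs_mul]
        have : s * (f' x0 - f' (x0 - s * t)) ≤ |f' x0 - f' (x0 - s * t)| := by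
          calc s * (f' x0 - f' (x0 - s * t)) ≤ |s * (f' x0 - f' (x0 - s * t))| := le_abs_self _
            _ = |f' x0 - f' (x0 - s * t)| := by rw [abs_mul, hs_abs, one_mul]
        linarith
      refine le_trans ?_ h1
      have h3 : |f' x0 - f' (x0 - s * t)| ≤ g t := by
        have := hlip x0 (x0 - s * t)
        have h4 : |x0 - (x0 - s * t)| = t := by
          rw [show x0 - (x0 - s * t) = s * t by ring, abs_mul, hs_abs, one_mul,
            abs_of_nonneg ht.1.le]
        rwa [h4] at this
      linarith
  have hGval : G gi - G 0 = f x0 - f (x0 - s * gi) := by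
    simp only [hG_def]; ring
  have hsplit : (∫ t in (0:ℝ)..gi, (|f' x0| - g t))
      = |f' x0| * gi - ∫ x in (0:ℝ)..gi, g x := by
    rw [intervalIntegral.integral_sub]
    · simp [mul_comm]
    · exact intervalIntegrable_const
    · rw [intervalIntegrable_iff_integrableOn_Icc_of_le hgi]; exact hgint
  have hmin' : f xhat ≤ f (x0 - s * gi) := hmin _
  rw [ge_iff_le, ← hsplit]
  calc (∫ t in (0:ℝ)..gi, (|f' x0| - g t)) ≤ G gi - G 0 := hkey
    _ = f x0 - f (x0 - s * gi) := hGval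
    _ ≤ f x0 - f xhat := by linarith
end

section
/- Let L1 and L̂1 be d-subspaces of R^D with principal angles θ_1 ≥ … ≥ θ_d, principal vectors v_1,…,v_d of L1, and let k be the number of nonzero principal angles. Set γ_i = sin^2(θ_i)/∑_{j=1}^k sin^2(θ_j) and assume WLOG γ_1 ≥ 1/d. Then the set {x ∈ L1 : dist(x, L̂1) < β · dist_G(L1, L̂1)} is contained in {x ∈ L1 : |v_1^T x| < (π√d/2) β}, for every β > 0. -/
theorem stmt15 (D d : ℕ) (hd : 0 < d)
    (L1 Lhat : Submodule ℝ (EuclideanSpace ℝ (Fin D)))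
    -- the principal angles between `L1` and `Lhat`
    (θ : Fin d → ℝ) (hθ : ∀ i, θ i ∈ Set.Icc 0 (Real.pi / 2))
    -- the principal vectors of `L1`, an orthonormal basis of `L1`
    (v : Fin d → EuclideanSpace ℝ (Fin D)) (hvon : Orthonormal ℝ v)
    (hvspan : Submodule.span ℝ (Set.range v) = L1)
    -- for `x = ∑ xᵢ vᵢ ∈ L1`, `dist(x, Lhat) = sqrt (∑ xᵢ² sin² θᵢ)`
    (hdist : ∀ x ∈ L1,
      Metric.infDist x (Lhat : Set (EuclideanSpace ℝ (Fin D))) =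
        Real.sqrt (∑ i, (inner ℝ (v i) x : ℝ) ^ 2 * Real.sin (θ i) ^ 2))
    -- `γ₁ = sin²θ₁ / ∑ⱼ sin²θⱼ ≥ 1/d` (WLOG)
    (hγ : 1 / (d : ℝ) ≤ Real.sin (θ ⟨0, hd⟩) ^ 2 / ∑ j, Real.sin (θ j) ^ 2)
    (β : ℝ) (hβ : 0 < β) :
    {x : EuclideanSpace ℝ (Fin D) | x ∈ L1 ∧
        Metric.infDist x (Lhat : Set (EuclideanSpace ℝ (Fin D))) <
          β * Real.sqrt (∑ i, θ i ^ 2)} ⊆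
      {x : EuclideanSpace ℝ (Fin D) | x ∈ L1 ∧
        |(inner ℝ (v ⟨0, hd⟩) x : ℝ)| < (Real.pi * Real.sqrt d / 2) * β} := by
  intro x hx
  obtain ⟨hxL, hxd⟩ := hx
  set i0 : Fin d := ⟨0, hd⟩ with hi0
  have hπ := Real.pi_pos
  have hdpos : (0:ℝ) < d := by exact_mod_cast hd
  have hs1nn : 0 ≤ Real.sin (θ i0) :=
    Real.sin_nonneg_of_nonneg_of_le_pi (hθ i0).1 (le_trans (hθ i0).2 (by linarith))
  have hs1 : 0 < Real.sin (θ i0) := by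
    rcases lt_or_eq_of_le hs1nn with h | h
    · exact h
    · exfalso
      rw [← h] at hγ
      norm_num at hγ
      have : (0:ℝ) < 1 / d := by positivity
      linarith
  have hSpos : 0 < ∑ j, Real.sin (θ j) ^ 2 :=
    Finset.sum_pos' (fun j _ => sq_nonneg _) ⟨i0, Finset.mem_univ _, by positivity⟩
  have hS : ∑ j, Real.sin (θ j) ^ 2 ≤ d * Real.sin (θ i0) ^ 2 := by
    rw [div_le_div_iff₀ hdpos hSpos] at hγ
    linarith
  have hθsum : ∑ i, θ i ^ 2 ≤ (Real.pi / 2 * Real.sqrt d * Real.sin (θ i0)) ^ 2 := by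
    have h1 : ∑ i, θ i ^ 2 ≤ ∑ i, (Real.pi / 2 * Real.sin (θ i)) ^ 2 := by
      apply Finset.sum_le_sum
      intro i _
      have hm := Real.mul_le_sin (hθ i).1 (hθ i).2
      have hle : θ i ≤ Real.pi / 2 * Real.sin (θ i) := by
        rw [div_mul_eq_mul_div, div_le_iff₀ hπ] at hm
        linarith
      exact pow_le_pow_left₀ (hθ i).1 hle 2
    have h2 : ∑ i, (Real.pi / 2 * Real.sin (θ i)) ^ 2
        = (Real.pi / 2) ^ 2 * ∑ i, Real.sin (θ i) ^ 2 := by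
      rw [Finset.mul_sum]; exact Finset.sum_congr rfl fun i _ => by ring
    have h3 : (Real.pi / 2 * Real.sqrt d * Real.sin (θ i0)) ^ 2
        = (Real.pi / 2) ^ 2 * ((d : ℝ) * Real.sin (θ i0) ^ 2) := by
      rw [mul_pow, mul_pow, Real.sq_sqrt hdpos.le]; ring
    rw [h3]
    calc ∑ i, θ i ^ 2 ≤ (Real.pi / 2) ^ 2 * ∑ i, Real.sin (θ i) ^ 2 := by rw [← h2]; exact h1
      _ ≤ (Real.pi / 2) ^ 2 * ((d : ℝ) * Real.sin (θ i0) ^ 2) :=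
        mul_le_mul_of_nonneg_left hS (by positivity)
  have hsqrt : Real.sqrt (∑ i, θ i ^ 2) ≤ Real.pi / 2 * Real.sqrt d * Real.sin (θ i0) := by
    calc Real.sqrt (∑ i, θ i ^ 2)
        ≤ Real.sqrt ((Real.pi / 2 * Real.sqrt d * Real.sin (θ i0)) ^ 2) :=
          Real.sqrt_le_sqrt hθsum
      _ = _ := Real.sqrt_sq (by positivity)
  have hlow : |(inner ℝ (v i0) x : ℝ)| * Real.sin (θ i0) ≤
      Metric.infDist x (Lhat : Set (EuclideanSpace ℝ (Fin D))) := by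
    rw [hdist x hxL]
    have hsq : (|(inner ℝ (v i0) x : ℝ)| * Real.sin (θ i0)) ^ 2
        ≤ ∑ i, (inner ℝ (v i) x : ℝ) ^ 2 * Real.sin (θ i) ^ 2 := by
      have h := Finset.single_le_sum
        (f := fun i => (inner ℝ (v i) x : ℝ) ^ 2 * Real.sin (θ i) ^ 2)
        (fun i _ => by positivity) (Finset.mem_univ i0)
      calc (|(inner ℝ (v i0) x : ℝ)| * Real.sin (θ i0)) ^ 2
          = (inner ℝ (v i0) x : ℝ) ^ 2 * Real.sin (θ i0) ^ 2 := by rw [mul_pow, sq_abs]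
        _ ≤ _ := h
    have := Real.sqrt_le_sqrt hsq
    rwa [Real.sqrt_sq (by positivity)] at this
  have hchain : |(inner ℝ (v i0) x : ℝ)| * Real.sin (θ i0)
      < (Real.pi * Real.sqrt d / 2 * β) * Real.sin (θ i0) := by
    calc |(inner ℝ (v i0) x : ℝ)| * Real.sin (θ i0)
        ≤ Metric.infDist x (Lhat : Set (EuclideanSpace ℝ (Fin D))) := hlow
      _ < β * Real.sqrt (∑ i, θ i ^ 2) := hxd
      _ ≤ β * (Real.pi / 2 * Real.sqrt d * Real.sin (θ i0)) :=
          mul_le_mul_of_nonneg_left hsqrt hβ.le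
      _ = (Real.pi * Real.sqrt d / 2 * β) * Real.sin (θ i0) := by ring
  exact ⟨hxL, lt_of_mul_lt_mul_right hchain hs1nn⟩
end
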